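/- Let K be a totally real number field of degree d. For every positive definite quadratic form Q in n variables over K, min(Q) ≤ σ_{n,K} · N_{K/Q}(det Q)^{1/n}, where σ_{n,K} = 4^d · ω_n^{−2d/n} · |d_K| and min(Q) = min{ N_{K/Q}(Q(x)) : 0 ≠ x ∈ Oⁿ }. -/

import Mathlib

open NumberField Module Matrix

set_option maxHeartbeats 1000000 in
open MeasureTheory Finset in
/-- Hermite-type inequality over a totally real number field K: every positive definite
quadratic form Q in n variables over K has min(Q) ≤ σ_{n,K} · N(det Q)^{1/n}, i.e. there is a
nonzero integral vector x with N(Q(x)) ≤ σ_{n,K} · N(det Q)^{1/n}. -/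
theorem min_le_sigma_mul_det
    (K : Type*) [Field K] [NumberField K]
    (htr : Fintype.card (K →+* ℝ) = finrank ℚ K)
    (n : ℕ) (hn : 1 ≤ n)
    (Q : Matrix (Fin n) (Fin n) K) (hsymm : Q.IsSymm)
    (hpos : ∀ ν : K →+* ℝ, (Q.map fun a => ν a).PosDef) :
    ∃ x : Fin n → 𝓞 K, x ≠ 0 ∧
      (Algebra.norm ℚ ((fun i => (x i : K)) ⬝ᵥ Q.mulVec fun i => (x i : K)) : ℝ) ≤
        (4 : ℝ) ^ (finrank ℚ K) *
          (Real.pi ^ ((n : ℝ) / 2) / Real.Gamma ((n : ℝ) / 2 + 1)) ^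
            (-(2 * (finrank ℚ K : ℝ)) / (n : ℝ)) *
          |(NumberField.discr K : ℝ)| *
          (Algebra.norm ℚ Q.det : ℝ) ^ ((1 : ℝ) / (n : ℝ)) := by
  classical
  set d := finrank ℚ K with hd
  have hd1 : 1 ≤ d := Module.finrank_pos
  have hdR : (0:ℝ) < d := by exact_mod_cast hd1
  have hnR : (0:ℝ) < n := by exact_mod_cast hn
  haveI hne : Nonempty (K →+* ℝ) := by
    rw [← Fintype.card_pos_iff, htr]; exact hd1
  haveI : Nonempty (Fin n) := ⟨⟨0, hn⟩⟩
  haveI : Nonempty (K →+* ℝ) := hne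
  -- the index types
  set κ := Free.ChooseBasisIndex ℤ (𝓞 K) with hκdef
  have hκcard : Fintype.card κ = Fintype.card (K →+* ℝ) := by
    rw [← finrank_eq_card_chooseBasisIndex, RingOfIntegers.rank, htr]
  let eκ : κ ≃ (K →+* ℝ) := Fintype.equivOfCardEq hκcard
  -- the equivalence between real embeddings and complex embeddings
  have hinj : Function.Injective
      (fun ν : K →+* ℝ => (Complex.ofRealHom.comp ν).toRatAlgHom) := by
    intro ν ν' h
    ext a
    have := congrArg (fun f => (f : K →ₐ[ℚ] ℂ) a) h
    simpa using Complex.ofReal_injective this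
  let eℂ : (K →+* ℝ) ≃ (K →ₐ[ℚ] ℂ) :=
    Equiv.ofBijective _ ((Fintype.bijective_iff_injective_and_card _).mpr
      ⟨hinj, by rw [htr, AlgHom.card ℚ K ℂ]⟩)
  have heℂ : ∀ (ν : K →+* ℝ) (a : K), eℂ ν a = Complex.ofReal (ν a) := fun ν a => rfl
  -- norm as product over real embeddings
  have normProd : ∀ a : K, ((Algebra.norm ℚ a : ℚ) : ℝ) = ∏ ν : K →+* ℝ, ν a := by
    intro a
    have h1 : (algebraMap ℚ ℂ) (Algebra.norm ℚ a) = ∏ σ : K →ₐ[ℚ] ℂ, σ a :=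
      Algebra.norm_eq_prod_embeddings ℚ ℂ a
    have h2 : ∏ σ : K →ₐ[ℚ] ℂ, σ a = ∏ ν : K →+* ℝ, Complex.ofReal (ν a) :=
      (Fintype.prod_equiv eℂ _ _ (fun ν => (heℂ ν a))).symm
    apply Complex.ofReal_injective
    rw [show ((((Algebra.norm ℚ) a : ℚ) : ℝ) : ℂ) = (algebraMap ℚ ℂ) (Algebra.norm ℚ a) by
      push_cast; rfl, h1, h2]
    push_cast
    rfl
  -- the real embeddings matrix and the discriminant
  let bO : Basis κ ℤ (𝓞 K) := RingOfIntegers.basis K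
  let A : Matrix (K →+* ℝ) (K →+* ℝ) ℝ := fun ν₀ ν => ν ((bO (eκ.symm ν₀) : 𝓞 K) : K)
  have hdiscr : ((NumberField.discr K : ℤ) : ℝ) = A.det ^ 2 := by
    have h := Algebra.discr_eq_det_embeddingsMatrixReindex_pow_two ℚ ℂ
      (integralBasis K) (eκ.trans eℂ)
    rw [← NumberField.coe_discr] at h
    set Mr : Matrix κ κ ℝ := Matrix.of (fun i j : κ => (eκ j) (integralBasis K i)) with hMrdef
    have hM : Algebra.embeddingsMatrixReindex ℚ ℂ (⇑(integralBasis K)) (eκ.trans eℂ)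
        = Complex.ofRealHom.mapMatrix Mr := by
      funext i j
      rfl
    rw [hM, ← RingHom.map_det, ← map_pow] at h
    have hdetA : A.det = Mr.det := by
      have hA : A = Mr.submatrix eκ.symm eκ.symm := by
        funext ν₀ ν
        simp [A, hMrdef, Matrix.of_apply, Equiv.apply_symm_apply, integralBasis_apply, bO,
          Matrix.submatrix_apply]
      rw [hA, Matrix.det_submatrix_equiv_self]
    rw [hdetA]
    apply Complex.ofReal_injective
    rw [show (Complex.ofReal (((NumberField.discr K : ℤ) : ℝ)))
        = algebraMap ℚ ℂ ((NumberField.discr K : ℚ)) by push_cast; norm_num, h]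
    rfl
  have hdiscr_ne : A.det ≠ 0 := by
    intro h
    have := hdiscr
    rw [h] at this
    simp only [ne_eq, zero_pow, OfNat.ofNat_ne_zero, not_false_eq_true] at this
    exact (Int.cast_injective.ne (NumberField.discr_ne_zero K)) (by exact_mod_cast this)
  -- the standard basis of V
  let b₀ : Basis (Σ _ : K →+* ℝ, Fin n) ℝ ((K →+* ℝ) → Fin n → ℝ) := Pi.basis (fun _ => Pi.basisFun ℝ (Fin n))
  haveI : Nonempty (Σ _ : K →+* ℝ, Fin n) := ⟨⟨Classical.arbitrary _, ⟨0, hn⟩⟩⟩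
  -- the lattice matrix
  let B : Matrix (Σ _ : K →+* ℝ, Fin n) (Σ _ : K →+* ℝ, Fin n) ℝ :=
    fun s t => A s.1 t.1 * (1 : Matrix (Fin n) (Fin n) ℝ) s.2 t.2
  have hBdet : B.det = A.det ^ n := by
    have hBk : B = ((Matrix.kroneckerMap (· * ·) A (1 : Matrix (Fin n) (Fin n) ℝ)).submatrix
        (Equiv.sigmaEquivProd (K →+* ℝ) (Fin n)) (Equiv.sigmaEquivProd (K →+* ℝ) (Fin n))) := rfl
    rw [hBk, Matrix.det_submatrix_equiv_self, Matrix.det_kronecker]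
    simp [Fintype.card_fin]
  have hBunit : IsUnit B := by
    apply (Matrix.isUnit_iff_isUnit_det B).mpr
    rw [hBdet]
    exact (pow_ne_zero n hdiscr_ne).isUnit
  -- the uncurrying linear equivalence
  let Λ : ((Σ _ : K →+* ℝ, Fin n) → ℝ) ≃ₗ[ℝ] ((K →+* ℝ) → Fin n → ℝ) :=
    { toFun := fun y ν i => y ⟨ν, i⟩
      map_add' := fun _ _ => rfl
      map_smul' := fun _ _ => rfl
      invFun := fun v s => v s.1 s.2
      left_inv := fun y => funext fun s => by cases s; rfl
      right_inv := fun v => rfl }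
  -- the lattice basis
  let w : (Σ _ : K →+* ℝ, Fin n) → ((K →+* ℝ) → Fin n → ℝ) := fun s => Λ (B s)
  have hw : LinearIndependent ℝ w := by
    have h1 : LinearIndependent ℝ (fun s => B s) :=
      Matrix.linearIndependent_rows_iff_isUnit.mpr hBunit
    exact h1.map' Λ.toLinearMap Λ.ker
  let b : Basis (Σ _ : K →+* ℝ, Fin n) ℝ ((K →+* ℝ) → Fin n → ℝ) :=
    basisOfLinearIndependentOfCardEqFinrank hw (finrank_eq_card_basis b₀).symm
  have hb : ⇑b = w := coe_basisOfLinearIndependentOfCardEqFinrank hw _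
  -- covolume of the lattice
  have hcovol : volume (ZSpan.fundamentalDomain b) = ENNReal.ofReal (|A.det| ^ n) := by
    have h1 : ZSpan.fundamentalDomain b₀ =
        Set.pi Set.univ (fun _ : K →+* ℝ => Set.pi Set.univ (fun _ : Fin n => Set.Ico (0:ℝ) 1)) := by
      ext y
      simp only [ZSpan.mem_fundamentalDomain, Set.mem_pi, Set.mem_univ, forall_true_left,
        Sigma.forall, b₀, Pi.basis_repr, Pi.basisFun_repr]
    rw [ZSpan.measure_fundamentalDomain b volume b₀, h1, volume_pi_pi]
    simp only [volume_pi_pi, Real.volume_Ico, sub_zero, ENNReal.ofReal_one,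
      Finset.prod_const_one, mul_one]
    congr 1
    rw [Basis.det_apply]
    have hmat : b₀.toMatrix ⇑b = Bᵀ := by
      funext st t
      rw [Basis.toMatrix_apply, hb]
      rfl
    rw [hmat, Matrix.det_transpose, hBdet, abs_pow]
  -- numerical setup
  set ω : ℝ := Real.pi ^ ((n : ℝ) / 2) / Real.Gamma ((n : ℝ) / 2 + 1) with hω
  have hωpos : 0 < ω := by
    apply div_pos (Real.rpow_pos_of_pos Real.pi_pos _)
    apply Real.Gamma_pos_of_pos; positivity
  set D : ℝ := |(NumberField.discr K : ℝ)| with hD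
  have hDdet : D = A.det ^ 2 := by rw [hD, hdiscr, abs_of_nonneg (sq_nonneg _)]
  have hDpos : 0 < D := by
    rw [hDdet]
    exact lt_of_le_of_ne (sq_nonneg _) (Ne.symm (pow_ne_zero 2 hdiscr_ne))
  set N : ℝ := ((Algebra.norm ℚ Q.det : ℚ) : ℝ) with hN
  have hNprod : N = ∏ ν : K →+* ℝ, (Q.map fun a => ν a).det := by
    rw [hN, normProd]
    exact Finset.prod_congr rfl fun ν _ => (RingHom.map_det ν Q).symm ▸ rfl
  have hNpos : 0 < N := by
    rw [hNprod]
    exact Finset.prod_pos fun ν _ => (hpos ν).det_pos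
  set T : ℝ := (4 : ℝ) ^ d * ω ^ (-(2 * (d : ℝ)) / (n : ℝ)) * D * N ^ ((1 : ℝ) / (n : ℝ)) with hT
  have hTpos : 0 < T := by
    apply mul_pos (mul_pos (mul_pos (by positivity) (Real.rpow_pos_of_pos hωpos _)) hDpos)
    exact Real.rpow_pos_of_pos hNpos _
  set t : ℝ := T ^ ((d : ℝ)⁻¹) with ht
  have htpos : 0 < t := Real.rpow_pos_of_pos hTpos _
  have htd : t ^ d = T := by
    rw [ht, ← Real.rpow_natCast (T ^ ((d:ℝ)⁻¹)) d, ← Real.rpow_mul hTpos.le,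
      inv_mul_cancel₀ hdR.ne', Real.rpow_one]
  -- the convex body
  set E : (K →+* ℝ) → Set (Fin n → ℝ) :=
    fun ν => {z : Fin n → ℝ | z ⬝ᵥ (Q.map fun a => ν a) *ᵥ z ≤ t} with hE
  set s : Set ((K →+* ℝ) → Fin n → ℝ) := Set.pi Set.univ E with hs
  -- per-embedding facts
  have htnn : (0:ℝ) ≤ t := htpos.le
  let ℓ : (Fin n → ℝ) ≃ₗ[ℝ] EuclideanSpace ℝ (Fin n) := (WithLp.linearEquiv 2 ℝ (Fin n → ℝ)).symm
  set Ball : Set (Fin n → ℝ) := {z : Fin n → ℝ | z ⬝ᵥ z ≤ t} with hBalldef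
  have hBallmem : Ball = ⇑ℓ ⁻¹' (Metric.closedBall (0 : EuclideanSpace ℝ (Fin n)) (Real.sqrt t)) := by
    ext z
    have h1 : ∑ i, ‖(ℓ z) i‖ ^ 2 = z ⬝ᵥ z := by
      simp [ℓ, dotProduct, Real.norm_eq_abs, sq_abs, pow_two]
    simp only [hBalldef, Set.mem_setOf_eq, Set.mem_preimage, Metric.mem_closedBall,
      dist_zero_right, EuclideanSpace.norm_eq, h1, Real.sqrt_le_sqrt_iff htnn]
  have hBallconv : Convex ℝ Ball := by
    rw [hBallmem]
    exact (convex_closedBall _ _).linear_preimage ℓ.toLinearMap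
  have hBallcpt : IsCompact Ball := by
    have hBallimg : Ball = ⇑ℓ.symm '' (Metric.closedBall (0 : EuclideanSpace ℝ (Fin n)) (Real.sqrt t)) := by
      rw [hBallmem]
      ext z
      constructor
      · intro hz
        exact ⟨ℓ z, hz, ℓ.symm_apply_apply z⟩
      · rintro ⟨v, hv, rfl⟩
        simpa [ℓ.apply_symm_apply] using hv
    rw [hBallimg]
    exact (isCompact_closedBall _ _).image ℓ.symm.toLinearMap.continuous_of_finiteDimensional
  have hωeq : Real.sqrt Real.pi ^ n / Real.Gamma ((n:ℝ)/2 + 1) = ω := by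
    rw [hω]
    congr 1
    rw [Real.sqrt_eq_rpow, ← Real.rpow_natCast (Real.pi ^ ((1:ℝ)/2)) n,
      ← Real.rpow_mul Real.pi_pos.le]
    congr 1
    ring
  have hBallvol : volume Ball = ENNReal.ofReal (Real.sqrt t ^ n * ω) := by
    have hpre : ((MeasurableEquiv.toLp 2 (Fin n → ℝ)).symm) ⁻¹' Ball
        = Metric.closedBall (0 : EuclideanSpace ℝ (Fin n)) (Real.sqrt t) := by
      ext u
      have h1 : ∑ i, ‖u i‖ ^ 2 = ((MeasurableEquiv.toLp 2 (Fin n → ℝ)).symm u) ⬝ᵥ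
          ((MeasurableEquiv.toLp 2 (Fin n → ℝ)).symm u) := by
        simp [MeasurableEquiv.toLp_symm_apply, dotProduct, Real.norm_eq_abs, sq_abs, pow_two]
      simp only [Set.mem_preimage, hBalldef, Set.mem_setOf_eq, Metric.mem_closedBall,
        dist_zero_right, EuclideanSpace.norm_eq, h1, Real.sqrt_le_sqrt_iff htnn]
    rw [← (EuclideanSpace.volume_preserving_symm_measurableEquiv_toLp (Fin n)).measure_preimage
      (hBallcpt.isClosed.measurableSet.nullMeasurableSet), hpre,
      EuclideanSpace.volume_closedBall]
    rw [← ENNReal.ofReal_pow (Real.sqrt_nonneg t), ← ENNReal.ofReal_mul (by positivity)]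
    congr 1
    rw [Fintype.card_fin, hωeq]
  have hEfacts : ∀ ν : K →+* ℝ, volume (E ν) =
      ENNReal.ofReal ((Real.sqrt ((Q.map fun a => ν a).det))⁻¹ * (Real.sqrt t ^ n * ω))
      ∧ Convex ℝ (E ν) ∧ IsCompact (E ν) := by
    intro ν
    have hQν : (Q.map fun a => ν a).PosDef := hpos ν
    set Bν := (open MatrixOrder in CFC.sqrt (Q.map fun a => ν a)) with hBνdef
    have hBpsd : Bν.PosSemidef := by open MatrixOrder in exact (CFC.sqrt_nonneg _).posSemidef
    have hBB : Bν * Bν = Q.map fun a => ν a := by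
      open MatrixOrder in exact CFC.sqrt_mul_sqrt_self _ hQν.posSemidef.nonneg
    have hhermC : Bνᴴ = Bν := hBpsd.1
    have hherm : Bνᵀ = Bν := by
      ext i j
      have h := congrFun (congrFun hhermC i) j
      rw [Matrix.conjTranspose_apply, star_trivial] at h
      rw [Matrix.transpose_apply, h]
    have hdetnn : 0 ≤ Bν.det := by
      rw [hBpsd.1.det_eq_prod_eigenvalues]
      exact Finset.prod_nonneg fun i _ => by
        simpa using hBpsd.eigenvalues_nonneg i
    have hdet2 : Bν.det * Bν.det = (Q.map fun a => ν a).det := by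
      rw [← Matrix.det_mul, hBB]
    have hdetpos : 0 < Bν.det := by
      rcases hdetnn.eq_or_lt with h0 | h
      · exfalso
        have := hQν.det_pos
        rw [← hdet2, ← h0, mul_zero] at this
        exact lt_irrefl _ this
      · exact h
    have hsq : Real.sqrt ((Q.map fun a => ν a).det) = Bν.det := by
      rw [← hdet2, Real.sqrt_mul_self hdetnn]
    have hquad : ∀ z : Fin n → ℝ, z ⬝ᵥ (Q.map fun a => ν a) *ᵥ z = (Bν *ᵥ z) ⬝ᵥ (Bν *ᵥ z) := by
      intro z
      have hvm : z ᵥ* Bν = Bν *ᵥ z := by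
        conv_lhs => rw [← hherm]
        rw [Matrix.vecMul_transpose]
      calc z ⬝ᵥ (Q.map fun a => ν a) *ᵥ z
          = z ⬝ᵥ (Bν * Bν) *ᵥ z := by rw [hBB]
        _ = z ⬝ᵥ Bν *ᵥ (Bν *ᵥ z) := by rw [← Matrix.mulVec_mulVec]
        _ = (z ᵥ* Bν) ⬝ᵥ (Bν *ᵥ z) := by rw [Matrix.dotProduct_mulVec]
        _ = (Bν *ᵥ z) ⬝ᵥ (Bν *ᵥ z) := by rw [hvm]
    have hEpre : E ν = ⇑(Matrix.toLin' Bν) ⁻¹' Ball := by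
      ext z
      simp only [hE, Set.mem_setOf_eq, Set.mem_preimage, hBalldef, Matrix.toLin'_apply, hquad]
    have hdetne : Bν.det ≠ 0 := hdetpos.ne'
    have h1 : Bν * Bν⁻¹ = 1 := Matrix.mul_nonsing_inv Bν hdetne.isUnit
    have h2 : Bν⁻¹ * Bν = 1 := Matrix.nonsing_inv_mul Bν hdetne.isUnit
    refine ⟨?_, ?_, ?_⟩
    · rw [hEpre, Measure.addHaar_preimage_linearMap volume
        (by rw [LinearMap.det_toLin']; exact hdetne) Ball, hBallvol, LinearMap.det_toLin']
      rw [abs_inv, abs_of_pos hdetpos, ← hsq, ← ENNReal.ofReal_mul (by positivity)]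
    · rw [hEpre]
      exact hBallconv.linear_preimage (Matrix.toLin' Bν)
    · have hEimg : E ν = ⇑(Matrix.toLin' Bν⁻¹) '' Ball := by
        rw [hEpre]
        ext z
        constructor
        · intro hz
          refine ⟨Matrix.toLin' Bν z, hz, ?_⟩
          rw [← Matrix.toLin'_mul_apply, h2, Matrix.toLin'_one, LinearMap.id_apply]
        · rintro ⟨v, hv, rfl⟩
          show Matrix.toLin' Bν (Matrix.toLin' Bν⁻¹ v) ∈ Ball
          rw [← Matrix.toLin'_mul_apply, h1, Matrix.toLin'_one, LinearMap.id_apply]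
          exact hv
      rw [hEimg]
      exact hBallcpt.image (Matrix.toLin' Bν⁻¹).continuous_of_finiteDimensional
  have hEvol : ∀ ν : K →+* ℝ, volume (E ν) =
      ENNReal.ofReal ((Real.sqrt ((Q.map fun a => ν a).det))⁻¹ * (Real.sqrt t ^ n * ω)) :=
    fun ν => (hEfacts ν).1
  have hEconv : ∀ ν : K →+* ℝ, Convex ℝ (E ν) := fun ν => (hEfacts ν).2.1
  have hEcpt : ∀ ν : K →+* ℝ, IsCompact (E ν) := fun ν => (hEfacts ν).2.2
  -- Minkowski
  have hscpt : IsCompact s := isCompact_univ_pi hEcpt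
  have hsconv : Convex ℝ s := convex_pi (fun ν _ => hEconv ν)
  have hssymm : ∀ y ∈ s, -y ∈ s := by
    intro y hy ν _
    have h := hy ν (Set.mem_univ ν)
    simp only [hE, Set.mem_setOf_eq] at h ⊢
    simpa [Matrix.mulVec_neg, dotProduct_neg, neg_dotProduct] using h
  have hP2 : (∏ ν : K →+* ℝ, Real.sqrt ((Q.map fun a => ν a).det)) = N ^ ((1:ℝ)/2) := by
    rw [hNprod]
    calc ∏ ν : K →+* ℝ, Real.sqrt ((Q.map fun a => ν a).det)
        = ∏ ν : K →+* ℝ, ((Q.map fun a => ν a).det) ^ ((1:ℝ)/2) :=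
          Finset.prod_congr rfl fun ν _ => Real.sqrt_eq_rpow _
      _ = (∏ ν : K →+* ℝ, (Q.map fun a => ν a).det) ^ ((1:ℝ)/2) :=
          Real.finset_prod_rpow _ _ (fun ν _ => (hpos ν).det_pos.le) _
  have hfinrank : finrank ℝ ((K →+* ℝ) → Fin n → ℝ) = d * n := by
    rw [finrank_eq_card_basis b₀, Fintype.card_sigma, Finset.sum_const, Finset.card_univ,
      Fintype.card_fin, htr, smul_eq_mul]
  have hvol : volume (ZSpan.fundamentalDomain b) * 2 ^ finrank ℝ ((K →+* ℝ) → Fin n → ℝ) ≤ volume s := by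
    -- compute both sides as `ofReal` of real numbers and compare
    have hsvol : volume s = ENNReal.ofReal ((N ^ ((1:ℝ)/2))⁻¹ * (Real.sqrt t ^ n * ω) ^ d) := by
      rw [hs, volume_pi_pi]
      have : ∀ ν : K →+* ℝ, volume (E ν) =
          ENNReal.ofReal ((Real.sqrt ((Q.map fun a => ν a).det))⁻¹ * (Real.sqrt t ^ n * ω)) :=
        hEvol
      rw [Finset.prod_congr rfl (fun ν _ => this ν),
        ← ENNReal.ofReal_prod_of_nonneg (fun ν _ => by positivity)]
      congr 1
      rw [Finset.prod_mul_distrib, Finset.prod_const, Finset.card_univ, htr,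
        Finset.prod_inv_distrib, hP2]
    rw [hsvol, hcovol, hfinrank]
    have h2pow : (2 : ENNReal) ^ (d * n) = ENNReal.ofReal ((2:ℝ) ^ (d * n)) := by
      rw [ENNReal.ofReal_pow (by norm_num)]
      norm_num
    rw [h2pow, ← ENNReal.ofReal_mul (by positivity)]
    apply ENNReal.ofReal_le_ofReal
    -- the key real computation
    have hAD : |A.det| = D ^ ((1:ℝ)/2) := by
      rw [← Real.sqrt_eq_rpow, hDdet, Real.sqrt_sq_eq_abs]
    have hst : Real.sqrt t ^ n = t ^ ((n:ℝ)/2) := by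
      rw [Real.sqrt_eq_rpow, ← Real.rpow_natCast (t ^ ((1:ℝ)/2)) n, ← Real.rpow_mul htnn]
      congr 1
      ring
    have hDn : |A.det| ^ n = D ^ ((n:ℝ)/2) := by
      rw [hAD, ← Real.rpow_natCast (D ^ ((1:ℝ)/2)) n, ← Real.rpow_mul hDpos.le]
      congr 1
      ring
    have hTn2 : (t ^ ((n:ℝ)/2)) ^ d =
        2 ^ (d * n) * ω ^ (-(d:ℝ)) * D ^ ((n:ℝ)/2) * N ^ ((1:ℝ)/2) := by
      rw [← Real.rpow_natCast (t ^ ((n:ℝ)/2)) d, ← Real.rpow_mul htnn, ht,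
        ← Real.rpow_mul hTpos.le]
      have hexp : (d:ℝ)⁻¹ * ((n:ℝ)/2 * d) = (n:ℝ)/2 := by
        field_simp
      rw [hexp, hT]
      rw [Real.mul_rpow (by positivity) (by positivity),
        Real.mul_rpow (by positivity) (by positivity),
        Real.mul_rpow (by positivity) (by positivity)]
      have h4 : ((4:ℝ) ^ d) ^ ((n:ℝ)/2) = 2 ^ (d * n) := by
        rw [show (4:ℝ) = 2 ^ 2 by norm_num, ← pow_mul,
          ← Real.rpow_natCast (2:ℝ) (2 * d), ← Real.rpow_mul (by norm_num)]
        rw [show ((2 * d : ℕ) : ℝ) * ((n:ℝ)/2) = ((d * n : ℕ) : ℝ) by push_cast; ring,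
          Real.rpow_natCast]
      have hωe : (ω ^ (-(2 * (d:ℝ)) / (n:ℝ))) ^ ((n:ℝ)/2) = ω ^ (-(d:ℝ)) := by
        rw [← Real.rpow_mul hωpos.le]
        congr 1
        field_simp
      have hNe : (N ^ ((1:ℝ)/(n:ℝ))) ^ ((n:ℝ)/2) = N ^ ((1:ℝ)/2) := by
        rw [← Real.rpow_mul hNpos.le]
        congr 1
        field_simp
      rw [h4, hωe, hNe]
    rw [hDn, hst, mul_pow, hTn2, ← Real.rpow_natCast ω d]
    apply le_of_eq
    have hω1 : ω ^ (-(d:ℝ)) * ω ^ ((d:ℕ):ℝ) = 1 := by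
      rw [← Real.rpow_add hωpos]
      simp
    have hN1 : (N ^ ((1:ℝ)/2))⁻¹ * N ^ ((1:ℝ)/2) = 1 :=
      inv_mul_cancel₀ (by positivity)
    calc D ^ ((n:ℝ)/2) * 2 ^ (d * n)
        = (2 ^ (d*n) * D ^ ((n:ℝ)/2)) *
            (((N ^ ((1:ℝ)/2))⁻¹ * N ^ ((1:ℝ)/2)) * (ω ^ (-(d:ℝ)) * ω ^ ((d:ℕ):ℝ))) := by
          rw [hN1, hω1]
          ring
      _ = (N ^ ((1:ℝ)/2))⁻¹ *
            (2 ^ (d * n) * ω ^ (-(d:ℝ)) * D ^ ((n:ℝ)/2) * N ^ ((1:ℝ)/2) * ω ^ ((d:ℕ):ℝ)) := by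
          ring
  haveI : Countable ↥(Submodule.span ℤ (Set.range ⇑b)).toAddSubgroup :=
    (inferInstance : Countable ↥(Submodule.span ℤ (Set.range ⇑b)))
  obtain ⟨y, hy0, hys⟩ := exists_ne_zero_mem_lattice_of_measure_mul_two_pow_le_measure
    (ZSpan.isAddFundamentalDomain' b volume) hssymm hsconv hscpt hvol
  -- pull the lattice point back to 𝓞 K
  let ψ : (Fin n → 𝓞 K) →ₗ[ℤ] ((K →+* ℝ) → Fin n → ℝ) :=
    { toFun := fun x ν i => ν ((x i : 𝓞 K) : K)
      map_add' := by intro x y; funext ν i; simp [Pi.add_apply]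
      map_smul' := by intro c x; funext ν i; simp [Pi.smul_apply] }
  have hspan : Submodule.span ℤ (Set.range ⇑b) ≤ LinearMap.range ψ := by
    rw [Submodule.span_le]
    rintro _ ⟨sidx, rfl⟩
    rw [SetLike.mem_coe]
    refine ⟨Pi.single sidx.2 (bO (eκ.symm sidx.1)), ?_⟩
    rw [hb]
    funext ν i
    rcases sidx with ⟨ν₀, j⟩
    by_cases hij : i = j
    · subst hij
      simp [ψ, w, Λ, B, A, Matrix.one_apply]
    · simp [ψ, w, Λ, B, A, Matrix.one_apply, Pi.single_eq_of_ne hij, Ne.symm hij]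
  obtain ⟨x, hx⟩ := hspan (SetLike.coe_mem (y : (Submodule.span ℤ (Set.range ⇑b)).toAddSubgroup))
  have hxne : x ≠ 0 := by
    rintro rfl
    apply hy0
    have : ((y : (Submodule.span ℤ (Set.range ⇑b)).toAddSubgroup) : (K →+* ℝ) → Fin n → ℝ) = 0 := by
      rw [← hx]; exact map_zero ψ
    exact Subtype.ext this
  refine ⟨x, hxne, ?_⟩
  -- final inequality
  have hval : ∀ ν : K →+* ℝ,
      ν ((fun i => (x i : K)) ⬝ᵥ Q.mulVec fun i => (x i : K)) =
      (ψ x ν) ⬝ᵥ (Q.map fun a => ν a) *ᵥ (ψ x ν) := by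
    intro ν
    simp only [dotProduct, Matrix.mulVec, map_sum, _root_.map_mul, Matrix.map_apply, ψ]
    rfl
  have hbound : ((Algebra.norm ℚ ((fun i => (x i : K)) ⬝ᵥ Q.mulVec fun i => (x i : K)) : ℚ) : ℝ)
      ≤ T := by
    rw [normProd]
    calc ∏ ν : K →+* ℝ, ν ((fun i => (x i : K)) ⬝ᵥ Q.mulVec fun i => (x i : K))
        ≤ ∏ _ν : K →+* ℝ, t := by
          apply Finset.prod_le_prod
          · intro ν _
            rw [hval ν]
            simpa using (hpos ν).posSemidef.dotProduct_mulVec_nonneg (ψ x ν)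
          · intro ν _
            rw [hval ν]
            have := hys ν (Set.mem_univ ν)
            rw [← hx] at this
            exact this
      _ = t ^ d := by rw [Finset.prod_const, Finset.card_univ, htr]
      _ = T := htd
  exact hbound.trans_eq (by rw [hT])
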